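/- arXiv:2603.25466 — 3 statements merged into one kernel-verified Lean document; each statement's English description precedes it below -/
import Mathlib

section
/- Let O(f) = (1/m)(L(f) + Φ(f)) be convex on ℝ^m with L differentiable and Φ convex, let f† minimize O, and let f̂ satisfy the fixed point relation f̂ = Prox_η(f̂ − η Ĝ(f̂)) for some η > 0 and map Ĝ: ℝ^m → ℝ^m. Then O(f̂) − O(f†) ≤ (1/m)⟨f̂ − f†, ∇L(f̂) − Ĝ(f̂)⟩. -/
open Set Filter Topology



lemma grad_ineq {E : Type*} [NormedAddCommGroup E] [InnerProductSpace ℝ E] [CompleteSpace E]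
    {L : E → ℝ} (hL : ConvexOn ℝ Set.univ L) {g x : E} (hg : HasGradientAt L g x) (y : E) :
    L x + (inner ℝ g (y - x) : ℝ) ≤ L y := by
  have hline : HasDerivAt (fun t : ℝ => x + t • (y - x)) (y - x) 0 := by
    simpa using ((hasDerivAt_id (0:ℝ)).smul_const (y - x)).const_add x
  have hDer : HasDerivAt (fun t : ℝ => L (x + t • (y - x))) (inner ℝ g (y - x) : ℝ) 0 := by
    have := HasFDerivAt.comp_hasDerivAt_of_eq (l := L) (f := fun t : ℝ => x + t • (y - x)) (hl := hg.hasFDerivAt) (hf := hline) (hy := by simp)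
    simpa [InnerProductSpace.toDual_apply_apply, Function.comp_def] using this
  have hconv : ConvexOn ℝ Set.univ (fun t : ℝ => L (x + t • (y - x))) := by
    have := hL.comp_affineMap (AffineMap.lineMap x y : ℝ →ᵃ[ℝ] E)
    simp only [Set.preimage_univ] at this
    have hfun : (L ∘ (AffineMap.lineMap x y : ℝ →ᵃ[ℝ] E)) = fun t : ℝ => L (x + t • (y - x)) := by
      funext t; simp [AffineMap.lineMap_apply]; rw [add_comm]
    rwa [hfun] at this
  have := hconv.le_slope_of_hasDerivAt (mem_univ (0:ℝ)) (mem_univ (1:ℝ)) one_pos hDer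
  simp [slope_def_field] at this
  linarith


lemma prox_subgrad {E : Type*} [NormedAddCommGroup E] [InnerProductSpace ℝ E]
    {Φ : E → ℝ} (hΦ : ConvexOn ℝ Set.univ Φ) {η : ℝ} (hη : 0 < η)
    {P : E → E}
    (hP : ∀ u f, 1 / (2 * η) * ‖u - P u‖ ^ 2 + Φ (P u)
        ≤ 1 / (2 * η) * ‖u - f‖ ^ 2 + Φ f)
    (u f : E) :
    Φ (P u) + (1/η) * (inner ℝ (u - P u) (f - P u) : ℝ) ≤ Φ f := by
  set a := u - P u with ha
  set b := f - P u with hb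
  set C := ‖b‖ ^ 2 / (2 * η) with hC
  have hX : ∀ t ∈ Ioc (0:ℝ) 1,
      Φ (P u) + (1/η) * (inner ℝ a b : ℝ) - Φ f ≤ t * C := by
    intro t ⟨ht0, ht1⟩
    have h1 := hP u (P u + t • b)
    have hnorm : ‖u - (P u + t • b)‖ ^ 2
        = ‖a‖ ^ 2 - 2 * t * (inner ℝ a b : ℝ) + t ^ 2 * ‖b‖ ^ 2 := by
      have : u - (P u + t • b) = a - t • b := by rw [ha]; abel
      rw [this, norm_sub_sq_real, real_inner_smul_right, norm_smul]
      simp [mul_pow, sq_abs]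
      ring
    have hcvx : Φ (P u + t • b) ≤ (1 - t) * Φ (P u) + t * Φ f := by
      have hc := hΦ.2 (Set.mem_univ (P u)) (Set.mem_univ f)
        (by linarith : (0:ℝ) ≤ 1 - t) (le_of_lt ht0) (by ring)
      have he : (1 - t) • P u + t • f = P u + t • b := by rw [hb]; module
      rw [he] at hc
      simpa using hc
    have hkey : 1 / (2 * η) * ‖a‖ ^ 2 + Φ (P u)
        ≤ 1 / (2 * η) * (‖a‖ ^ 2 - 2 * t * (inner ℝ a b : ℝ) + t ^ 2 * ‖b‖ ^ 2)
          + ((1 - t) * Φ (P u) + t * Φ f) := by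
      calc 1 / (2 * η) * ‖a‖ ^ 2 + Φ (P u)
          ≤ 1 / (2 * η) * ‖u - (P u + t • b)‖ ^ 2 + Φ (P u + t • b) := h1
        _ ≤ _ := by rw [hnorm]; linarith
    have hmul : t * (Φ (P u) + (1/η) * (inner ℝ a b : ℝ) - Φ f) ≤ t * (t * C) := by
      have hs : (1:ℝ)/η = 2 * (1/(2*η)) := by field_simp
      have hCdef : C = ‖b‖ ^ 2 * (1/(2*η)) := by rw [hC]; ring
      rw [hs, hCdef]
      nlinarith [hkey]
    exact le_of_mul_le_mul_left hmul ht0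
  have htend : Tendsto (fun t : ℝ => t * C) (𝓝[>] 0) (𝓝 0) := by
    have : Tendsto (fun t : ℝ => t * C) (𝓝 0) (𝓝 (0 * C)) :=
      (continuous_id.mul continuous_const).tendsto 0
    simpa using this.mono_left nhdsWithin_le_nhds
  have hfin : Φ (P u) + (1/η) * (inner ℝ a b : ℝ) - Φ f ≤ 0 := by
    refine ge_of_tendsto htend ?_
    filter_upwards [Ioc_mem_nhdsGT_of_mem (by simp : (0:ℝ) ∈ Ico (0:ℝ) 1)] with t ht
    exact hX t ht
  linarith
/-- Excess risk bound for any fixed point of the approximate proximal gradient update. -/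
theorem rat_excess_risk_bound (m : ℕ) (hm : 0 < m)
    (L Φ : EuclideanSpace ℝ (Fin m) → ℝ)
    (gradL Ghat : EuclideanSpace ℝ (Fin m) → EuclideanSpace ℝ (Fin m))
    (hL : ConvexOn ℝ Set.univ L)
    (hGL : ∀ f, HasGradientAt L (gradL f) f)
    (hΦ : ConvexOn ℝ Set.univ Φ)
    (O : EuclideanSpace ℝ (Fin m) → ℝ)
    (hO : ∀ f, O f = (1 / (m : ℝ)) * (L f + Φ f))
    (fdag : EuclideanSpace ℝ (Fin m)) (hfdag : ∀ f, O fdag ≤ O f)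
    (η : ℝ) (hη : 0 < η)
    (P : EuclideanSpace ℝ (Fin m) → EuclideanSpace ℝ (Fin m))
    (hP : ∀ u f, 1 / (2 * η) * ‖u - P u‖ ^ 2 + Φ (P u)
        ≤ 1 / (2 * η) * ‖u - f‖ ^ 2 + Φ f)
    (fhat : EuclideanSpace ℝ (Fin m))
    (hfix : fhat = P (fhat - η • Ghat fhat)) :
    O fhat - O fdag ≤ (1 / (m : ℝ)) * (inner ℝ (fhat - fdag) (gradL fhat - Ghat fhat) : ℝ) := by
  have hm' : (0:ℝ) < 1 / m := by positivity
  set g := gradL fhat with hg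
  set G := Ghat fhat with hGdef
  -- gradient inequality for L
  have h1 : L fhat + (inner ℝ g (fdag - fhat) : ℝ) ≤ L fdag := grad_ineq hL (hGL fhat) fdag
  -- prox subgradient inequality for Φ
  have h2 := prox_subgrad hΦ hη hP (fhat - η • G) fdag
  rw [← hfix] at h2
  have e1 : fhat - η • G - fhat = (-η) • G := by module
  rw [e1, real_inner_smul_left] at h2
  have hη' : η ≠ 0 := ne_of_gt hη
  have h2' : Φ fhat - (inner ℝ G (fdag - fhat) : ℝ) ≤ Φ fdag := by
    have : (1/η) * (-η * (inner ℝ G (fdag - fhat) : ℝ)) = -(inner ℝ G (fdag - fhat) : ℝ) := by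
      field_simp
    linarith [h2, this.symm ▸ h2]
  -- rewrite inners
  have e2 : fdag - fhat = -(fhat - fdag) := by module
  have i1 : (inner ℝ g (fdag - fhat) : ℝ) = -(inner ℝ (fhat - fdag) g : ℝ) := by
    rw [e2, inner_neg_right, real_inner_comm]
  have i2 : (inner ℝ G (fdag - fhat) : ℝ) = -(inner ℝ (fhat - fdag) G : ℝ) := by
    rw [e2, inner_neg_right, real_inner_comm]
  have key : L fhat + Φ fhat - (L fdag + Φ fdag)
      ≤ (inner ℝ (fhat - fdag) (g - G) : ℝ) := by
    rw [inner_sub_right]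
    rw [i1] at h1; rw [i2] at h2'
    linarith
  rw [hO fhat, hO fdag]
  have := mul_le_mul_of_nonneg_left key hm'.le
  nlinarith [this]
end

section
/- Let L: ℝ^m → ℝ be ν-strongly convex and differentiable, Φ: ℝ^m → ℝ convex, f† the minimizer of L + Φ, and f̂ a point satisfying f̂ = Prox_η(f̂ − η Ĝ(f̂)) for some η > 0 and map Ĝ. Then ‖f̂ − f†‖₂² ≤ (1/ν)⟨f̂ − f†, ∇L(f̂) − Ĝ(f̂)⟩. -/
open Filter Topology

variable {m : ℕ}

lemma line_slope_tendsto (L : EuclideanSpace ℝ (Fin m) → ℝ)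
    (g x y : EuclideanSpace ℝ (Fin m)) (hg : HasGradientAt L g x) :
    Tendsto (fun t : ℝ => (L (x + t • (y - x)) - L x) / t) (𝓝[>] (0:ℝ))
      (𝓝 (inner ℝ g (y - x) : ℝ)) := by
  have hc : HasDerivAt (fun t : ℝ => x + t • (y - x)) (y - x) 0 := by
    simpa using ((hasDerivAt_id (0:ℝ)).smul_const (y - x)).const_add x
  have hcomp : HasDerivAt (fun t : ℝ => L (x + t • (y - x))) (inner ℝ g (y - x) : ℝ) 0 := by
    have hg' : HasFDerivAt L ((InnerProductSpace.toDual ℝ (EuclideanSpace ℝ (Fin m))) g) (x + (0:ℝ) • (y - x)) := by simpa using hg.hasFDerivAt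
    have := hg'.comp_hasDerivAt 0 hc
    simp only [InnerProductSpace.toDual_apply_apply] at this
    exact this
  rw [hasDerivAt_iff_tendsto_slope] at hcomp
  have heq : (fun t : ℝ => (L (x + t • (y - x)) - L x) / t)
      = slope (fun t : ℝ => L (x + t • (y - x))) 0 := by
    funext t
    simp [slope_def_field]
  rw [heq]
  exact hcomp.mono_left (nhdsWithin_mono _ fun t ht => ne_of_gt ht)

lemma strong_grad_lb (L : EuclideanSpace ℝ (Fin m) → ℝ) (ν : ℝ)
    (hL : StrongConvexOn Set.univ ν L)
    (g x y : EuclideanSpace ℝ (Fin m)) (hg : HasGradientAt L g x) :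
    L x + inner ℝ g (y - x) + ν / 2 * ‖y - x‖ ^ 2 ≤ L y := by
  have key : ∀ t ∈ Set.Ioc (0:ℝ) 1,
      (L (x + t • (y - x)) - L x) / t ≤ L y - L x - (1 - t) * (ν / 2 * ‖y - x‖ ^ 2) := by
    intro t ht
    have h2 := hL.2 (Set.mem_univ x) (Set.mem_univ y)
      (by linarith [ht.1, ht.2] : (0:ℝ) ≤ 1 - t) (le_of_lt ht.1) (by ring)
    have hpt : (1 - t) • x + t • y = x + t • (y - x) := by
      module
    rw [hpt, norm_sub_rev] at h2
    simp only [smul_eq_mul] at h2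
    rw [div_le_iff₀ ht.1]
    nlinarith [ht.1]
  have h1 : Tendsto (fun t : ℝ => L y - L x - (1 - t) * (ν / 2 * ‖y - x‖ ^ 2))
      (𝓝[>] (0:ℝ)) (𝓝 (L y - L x - ν / 2 * ‖y - x‖ ^ 2)) := by
    have hcont : Continuous fun t : ℝ => L y - L x - (1 - t) * (ν / 2 * ‖y - x‖ ^ 2) := by
      fun_prop
    have := (hcont.tendsto 0).mono_left (nhdsWithin_le_nhds : 𝓝[>] (0:ℝ) ≤ 𝓝 0)
    simpa using this
  have h0 := line_slope_tendsto L g x y hg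
  have hev : (fun t : ℝ => (L (x + t • (y - x)) - L x) / t)
      ≤ᶠ[𝓝[>] (0:ℝ)] fun t => L y - L x - (1 - t) * (ν / 2 * ‖y - x‖ ^ 2) := by
    filter_upwards [Ioc_mem_nhdsGT_of_mem (by norm_num : (0:ℝ) ∈ Set.Ico (0:ℝ) 1)] with t ht
    exact key t ht
  have := le_of_tendsto_of_tendsto h0 h1 hev
  linarith

/-- Estimation error bound for a RaT fixed point under `ν`-strong convexity of the loss. -/
theorem rat_estimation_bound (m : ℕ)
    (L Φ : EuclideanSpace ℝ (Fin m) → ℝ) (ν : ℝ) (hν : 0 < ν)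
    (hL : StrongConvexOn Set.univ ν L)
    (gradL Ghat : EuclideanSpace ℝ (Fin m) → EuclideanSpace ℝ (Fin m))
    (hgradL : ∀ f, HasGradientAt L (gradL f) f)
    (hΦ : ConvexOn ℝ Set.univ Φ)
    (fdag : EuclideanSpace ℝ (Fin m))
    (hfdag : ∀ f, L fdag + Φ fdag ≤ L f + Φ f)
    (η : ℝ) (hη : 0 < η)
    (P : EuclideanSpace ℝ (Fin m) → EuclideanSpace ℝ (Fin m))
    (hP : ∀ u f, 1 / (2 * η) * ‖u - P u‖ ^ 2 + Φ (P u)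
        ≤ 1 / (2 * η) * ‖u - f‖ ^ 2 + Φ f)
    (fhat : EuclideanSpace ℝ (Fin m))
    (hfix : fhat = P (fhat - η • Ghat fhat)) :
    ‖fhat - fdag‖ ^ 2 ≤ (1 / ν) * (inner ℝ (fhat - fdag) (gradL fhat - Ghat fhat) : ℝ) := by
  set I1 : ℝ := inner ℝ (gradL fhat) (fdag - fhat) with hI1
  set I2 : ℝ := inner ℝ (gradL fdag) (fhat - fdag) with hI2
  set I3 : ℝ := inner ℝ (Ghat fhat) (fdag - fhat) with hI3
  -- strong convexity at both points
  have SG1 := strong_grad_lb L ν hL (gradL fhat) fhat fdag (hgradL fhat)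
  have SG2 := strong_grad_lb L ν hL (gradL fdag) fdag fhat (hgradL fdag)
  rw [norm_sub_rev fdag fhat] at SG1
  -- optimality of fdag : Φ fdag - Φ fhat ≤ I2
  have opt : Φ fdag - Φ fhat ≤ I2 := by
    refine ge_of_tendsto (line_slope_tendsto L (gradL fdag) fdag fhat (hgradL fdag)) ?_
    filter_upwards [Ioc_mem_nhdsGT_of_mem
      (by norm_num : (0:ℝ) ∈ Set.Ico (0:ℝ) 1)] with t ht
    have hconv := hΦ.2 (Set.mem_univ fdag) (Set.mem_univ fhat)
      (by linarith [ht.1, ht.2] : (0:ℝ) ≤ 1 - t) (le_of_lt ht.1) (by ring)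
    have hpt : (1 - t) • fdag + t • fhat = fdag + t • (fhat - fdag) := by module
    rw [hpt] at hconv
    have hmin := hfdag (fdag + t • (fhat - fdag))
    simp only [smul_eq_mul] at hconv
    rw [le_div_iff₀ ht.1]
    nlinarith
  -- prox fixed point : Φ fhat - Φ fdag ≤ I3
  have prox : Φ fhat - Φ fdag ≤ I3 := by
    have hc : Tendsto (fun t : ℝ => I3 + t * (1 / (2 * η) * ‖fdag - fhat‖ ^ 2))
        (𝓝[>] (0:ℝ)) (𝓝 I3) := by
      have hcont : Continuous fun t : ℝ => I3 + t * (1 / (2 * η) * ‖fdag - fhat‖ ^ 2) := by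
        fun_prop
      have := (hcont.tendsto 0).mono_left (nhdsWithin_le_nhds : 𝓝[>] (0:ℝ) ≤ 𝓝 0)
      simpa using this
    refine ge_of_tendsto hc ?_
    filter_upwards [Ioc_mem_nhdsGT_of_mem
      (by norm_num : (0:ℝ) ∈ Set.Ico (0:ℝ) 1)] with t ht
    have hkey := hP (fhat - η • Ghat fhat) ((1 - t) • fhat + t • fdag)
    rw [← hfix] at hkey
    have hA : fhat - η • Ghat fhat - fhat = -(η • Ghat fhat) := by module
    have hB : fhat - η • Ghat fhat - ((1 - t) • fhat + t • fdag)
        = -(η • Ghat fhat + t • (fdag - fhat)) := by module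
    rw [hA, hB, norm_neg, norm_neg, norm_add_sq_real] at hkey
    rw [real_inner_smul_left, real_inner_smul_right, norm_smul, norm_smul] at hkey
    rw [show ‖t‖ = t by rw [Real.norm_eq_abs, abs_of_pos ht.1]] at hkey
    have hconv := hΦ.2 (Set.mem_univ fhat) (Set.mem_univ fdag)
      (by linarith [ht.1, ht.2] : (0:ℝ) ≤ 1 - t) (le_of_lt ht.1) (by ring)
    simp only [smul_eq_mul] at hconv
    have hmul : 1 / (2 * η) * ((‖η‖ * ‖Ghat fhat‖) ^ 2 + 2 * (η * (t * I3))
          + (t * ‖fdag - fhat‖) ^ 2)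
        = 1 / (2 * η) * (‖η‖ * ‖Ghat fhat‖) ^ 2 + t * I3
          + t * (t * (1 / (2 * η) * ‖fdag - fhat‖ ^ 2)) := by
      field_simp
    rw [hmul] at hkey
    have hstep : t * (Φ fhat - Φ fdag)
        ≤ t * (I3 + t * (1 / (2 * η) * ‖fdag - fhat‖ ^ 2)) := by nlinarith
    exact le_of_mul_le_mul_left hstep ht.1
  -- rewrite target inner product
  have hIe : (inner ℝ (fhat - fdag) (gradL fhat - Ghat fhat) : ℝ) = -I1 + I3 := by
    simp only [hI1, hI3, inner_sub_left, inner_sub_right,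
      real_inner_comm fhat (gradL fhat), real_inner_comm fdag (gradL fhat),
      real_inner_comm fhat (Ghat fhat), real_inner_comm fdag (Ghat fhat)]
    ring
  rw [hIe]
  have hkey : ν * ‖fhat - fdag‖ ^ 2 ≤ -I1 + I3 := by nlinarith
  calc ‖fhat - fdag‖ ^ 2 = (1 / ν) * (ν * ‖fhat - fdag‖ ^ 2) := by field_simp
    _ ≤ (1 / ν) * (-I1 + I3) :=
      mul_le_mul_of_nonneg_left hkey (by positivity)
end

section
/- Let L be ν-strongly convex and differentiable, Φ convex, and f† the minimizer of L + Φ. For any f^k, define f^{k+1} = Prox_η(f^k − η Ĝ(f^k)) and the defect D(f^k) = f^{k+1} − f^k. Then ‖f^{k+1} − f†‖₂² ≤ (1/ν)⟨f^{k+1} − f†, ∇L(f^{k+1}) − Ĝ(f^k) − (1/η)D(f^k)⟩. -/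
open Filter Set Topology

section aux

variable {E : Type*} [NormedAddCommGroup E] [InnerProductSpace ℝ E] [CompleteSpace E]

/-- Directional derivative as a one-sided limit of difference quotients. -/
lemma aux_tendsto_dir (L : E → ℝ) (g x v : E) (h : HasGradientAt L g x) :
    Tendsto (fun t : ℝ => (L (x + t • v) - L x) / t) (𝓝[>] (0:ℝ))
      (𝓝 (inner ℝ g v : ℝ)) := by
  have hline : HasDerivAt (fun t : ℝ => x + t • v) v 0 := by
    simpa using ((hasDerivAt_id (0:ℝ)).smul_const v).const_add x
  have hx0 : x + (0:ℝ) • v = x := by simp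
  have hF : HasFDerivAt L (InnerProductSpace.toDual ℝ E g) (x + (0:ℝ) • v) := by
    rw [hx0]; exact h.hasFDerivAt
  have hcomp : HasDerivAt (fun t : ℝ => L (x + t • v)) ((inner ℝ g v : ℝ)) 0 := by
    exact (hF.comp_hasDerivAt 0 hline).congr_deriv (by simp)
  have hsl := hasDerivAt_iff_tendsto_slope.mp hcomp
  have hsub : (𝓝[>] (0:ℝ)) ≤ 𝓝[≠] (0:ℝ) :=
    nhdsWithin_mono _ (fun t ht => ne_of_gt ht)
  have := hsl.mono_left hsub
  refine this.congr (fun t => ?_)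
  simp [slope, hx0]
  ring

/-- Gradient inequality for strongly convex functions. -/
lemma aux_sc_grad {ν : ℝ} (L : E → ℝ) (hL : StrongConvexOn Set.univ ν L)
    (g x y : E) (hg : HasGradientAt L g x) :
    L x + (inner ℝ g (y - x) : ℝ) + ν / 2 * ‖y - x‖ ^ 2 ≤ L y := by
  have key : ∀ t : ℝ, t ∈ Ioo (0:ℝ) 1 →
      (L (x + t • (y - x)) - L x) / t ≤ L y - L x - (1 - t) * (ν / 2 * ‖y - x‖ ^ 2) := by
    intro t ht
    have h2 := hL.2 (mem_univ y) (mem_univ x) (le_of_lt ht.1) (by linarith [ht.2])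
      (by ring : t + (1 - t) = 1)
    have heq : t • y + (1 - t) • x = x + t • (y - x) := by
      rw [smul_sub]; module
    rw [heq] at h2
    have hy : ‖y - x‖ = ‖x - y‖ := by rw [norm_sub_rev]
    rw [div_le_iff₀ ht.1]
    have := h2
    simp only [smul_eq_mul] at this
    nlinarith [ht.1, this]
  have h1 : Tendsto (fun t : ℝ => (L (x + t • (y - x)) - L x) / t) (𝓝[>] (0:ℝ))
      (𝓝 (inner ℝ g (y - x) : ℝ)) := aux_tendsto_dir L g x (y - x) hg
  have h2 : Tendsto (fun t : ℝ => L y - L x - (1 - t) * (ν / 2 * ‖y - x‖ ^ 2))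
      (𝓝[>] (0:ℝ)) (𝓝 (L y - L x - (1 - 0) * (ν / 2 * ‖y - x‖ ^ 2))) := by
    apply Tendsto.mono_left _ nhdsWithin_le_nhds
    exact (Continuous.tendsto (by continuity) 0)
  have hev : ∀ᶠ t in 𝓝[>] (0:ℝ),
      (L (x + t • (y - x)) - L x) / t ≤ L y - L x - (1 - t) * (ν / 2 * ‖y - x‖ ^ 2) := by
    filter_upwards [Ioo_mem_nhdsGT_of_mem (by simp : (0:ℝ) ∈ Ico (0:ℝ) 1)] with t ht
    exact key t ht
  have := le_of_tendsto_of_tendsto h1 h2 hev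
  simp at this
  linarith

/-- Quadratic growth at the minimizer of a strongly convex function. -/
lemma aux_min_growth {ν : ℝ} (h : E → ℝ) (hh : StrongConvexOn Set.univ ν h)
    (xs : E) (hmin : ∀ x, h xs ≤ h x) (y : E) :
    h xs + ν / 2 * ‖y - xs‖ ^ 2 ≤ h y := by
  have key : ∀ t : ℝ, t ∈ Ioo (0:ℝ) 1 →
      (1 - t) * (ν / 2 * ‖y - xs‖ ^ 2) ≤ h y - h xs := by
    intro t ht
    have h2 := hh.2 (mem_univ y) (mem_univ xs) (le_of_lt ht.1) (by linarith [ht.2])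
      (by ring : t + (1 - t) = 1)
    have h3 := hmin (t • y + (1 - t) • xs)
    have hy : ‖y - xs‖ = ‖xs - y‖ := by rw [norm_sub_rev]
    simp only [smul_eq_mul] at h2
    nlinarith [ht.1, h2, h3]
  have h2 : Tendsto (fun t : ℝ => (1 - t) * (ν / 2 * ‖y - xs‖ ^ 2)) (𝓝[>] (0:ℝ))
      (𝓝 ((1 - 0) * (ν / 2 * ‖y - xs‖ ^ 2))) := by
    apply Tendsto.mono_left _ nhdsWithin_le_nhds
    exact (Continuous.tendsto (by continuity) 0)
  have hev : ∀ᶠ t in 𝓝[>] (0:ℝ),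
      (1 - t) * (ν / 2 * ‖y - xs‖ ^ 2) ≤ h y - h xs := by
    filter_upwards [Ioo_mem_nhdsGT_of_mem (by simp : (0:ℝ) ∈ Ico (0:ℝ) 1)] with t ht
    exact key t ht
  have := le_of_tendsto_of_tendsto h2 tendsto_const_nhds hev
  simp at this
  linarith

end aux

/-- One-step estimation error bound with the proximal operator defect term. -/
theorem rat_one_step_bound (m : ℕ)
    (L Φ : EuclideanSpace ℝ (Fin m) → ℝ) (ν : ℝ) (hν : 0 < ν)
    (hL : StrongConvexOn Set.univ ν L)
    (gradL Ghat : EuclideanSpace ℝ (Fin m) → EuclideanSpace ℝ (Fin m))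
    (hgradL : ∀ f, HasGradientAt L (gradL f) f)
    (hΦ : ConvexOn ℝ Set.univ Φ)
    (fdag : EuclideanSpace ℝ (Fin m))
    (hfdag : ∀ f, L fdag + Φ fdag ≤ L f + Φ f)
    (η : ℝ) (hη : 0 < η)
    (P : EuclideanSpace ℝ (Fin m) → EuclideanSpace ℝ (Fin m))
    (hP : ∀ u f, 1 / (2 * η) * ‖u - P u‖ ^ 2 + Φ (P u)
        ≤ 1 / (2 * η) * ‖u - f‖ ^ 2 + Φ f)
    (fk fk1 : EuclideanSpace ℝ (Fin m))
    (hfk1 : fk1 = P (fk - η • Ghat fk)) :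
    ‖fk1 - fdag‖ ^ 2
      ≤ (1 / ν) * (inner ℝ (fk1 - fdag)
          (gradL fk1 - Ghat fk - (1 / η) • (fk1 - fk)) : ℝ) := by
  set u : EuclideanSpace ℝ (Fin m) := fk - η • Ghat fk with hu
  set e : EuclideanSpace ℝ (Fin m) := fk1 - fdag with he
  set d : EuclideanSpace ℝ (Fin m) := fdag - fk1 with hd
  set w : EuclideanSpace ℝ (Fin m) := u - fk1 with hw
  -- Step C: prox inequality
  have stepC : Φ fk1 - Φ fdag ≤ -(1 / η) * (inner ℝ w d : ℝ) := by
    have key : ∀ t : ℝ, t ∈ Ioo (0:ℝ) 1 →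
        Φ fk1 - Φ fdag ≤ -(1 / η) * (inner ℝ w d : ℝ) + t / (2 * η) * ‖d‖ ^ 2 := by
      intro t ht
      have hP1 := hP u (fk1 + t • d)
      rw [← hfk1] at hP1
      have hconv := hΦ.2 (mem_univ fdag) (mem_univ fk1) (le_of_lt ht.1)
        (by linarith [ht.2]) (by ring : t + (1 - t) = 1)
      have heq : t • fdag + (1 - t) • fk1 = fk1 + t • d := by
        rw [hd, smul_sub]; module
      rw [heq] at hconv
      have hnorm : ‖u - (fk1 + t • d)‖ ^ 2
          = ‖w‖ ^ 2 - 2 * t * (inner ℝ w d : ℝ) + t ^ 2 * ‖d‖ ^ 2 := by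
        have : u - (fk1 + t • d) = w - t • d := by rw [hw]; abel
        rw [this, norm_sub_sq_real, real_inner_smul_right, norm_smul]
        simp [abs_of_pos ht.1]
        ring
      rw [hnorm] at hP1
      simp only [smul_eq_mul] at hconv
      have hwfk : ‖u - fk1‖ ^ 2 = ‖w‖ ^ 2 := rfl
      rw [hwfk] at hP1
      have hexp : ∀ I X Y : ℝ, 1 / (2 * η) * (X - 2 * t * I + t ^ 2 * Y)
          = 1 / (2 * η) * X + t * (-(1 / η) * I + t / (2 * η) * Y) := by
        intro I X Y
        have hη' : η ≠ 0 := ne_of_gt hη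
        field_simp
        ring
      rw [hexp] at hP1
      have hstep : t * (Φ fk1 - Φ fdag)
          ≤ t * (-(1 / η) * (inner ℝ w d : ℝ) + t / (2 * η) * ‖d‖ ^ 2) := by
        linarith [hP1, hconv]
      exact le_of_mul_le_mul_left hstep ht.1
    have h2 : Tendsto (fun t : ℝ => -(1 / η) * (inner ℝ w d : ℝ) + t / (2 * η) * ‖d‖ ^ 2)
      (𝓝[>] (0:ℝ)) (𝓝 (-(1 / η) * (inner ℝ w d : ℝ) + 0 / (2 * η) * ‖d‖ ^ 2)) := by
      apply Tendsto.mono_left _ nhdsWithin_le_nhds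
      exact Continuous.tendsto (by continuity) 0
    have hev : ∀ᶠ t in 𝓝[>] (0:ℝ), Φ fk1 - Φ fdag
        ≤ -(1 / η) * (inner ℝ w d : ℝ) + t / (2 * η) * ‖d‖ ^ 2 := by
      filter_upwards [Ioo_mem_nhdsGT_of_mem (by simp : (0:ℝ) ∈ Ico (0:ℝ) 1)] with t ht
      exact key t ht
    have := le_of_tendsto_of_tendsto tendsto_const_nhds h2 hev
    simpa using this
  -- Step A: strong convexity gradient inequality at fk1
  have stepA := aux_sc_grad L hL (gradL fk1) fk1 fdag (hgradL fk1)
  -- Step B: minimizer growth for L + Φ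
  have hLΦ : StrongConvexOn Set.univ ν (fun f => L f + Φ f) := by
    have := hL.add hΦ.uniformConvexOn_zero
    simpa [StrongConvexOn, Pi.add_def] using this
  have stepB := aux_min_growth (fun f => L f + Φ f) hLΦ fdag
    (fun f => hfdag f) fk1
  -- rewrite the goal's vector
  have hvec : gradL fk1 - Ghat fk - (1 / η) • (fk1 - fk)
      = gradL fk1 + (1 / η) • w := by
    rw [hw, hu]
    rw [smul_sub, smul_sub, smul_sub, smul_smul]
    field_simp
    module
  rw [hvec]
  have hinner : (inner ℝ e (gradL fk1 + (1 / η) • w) : ℝ)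
      = (inner ℝ e (gradL fk1) : ℝ) + (1 / η) * (inner ℝ e w : ℝ) := by
    rw [inner_add_right, real_inner_smul_right]
  have hed : (inner ℝ e w : ℝ) = -(inner ℝ w d : ℝ) := by
    have hend : e = -d := by rw [he, hd]; abel
    rw [hend, inner_neg_left, real_inner_comm]
  have heg : (inner ℝ e (gradL fk1) : ℝ) = -(inner ℝ (gradL fk1) d : ℝ) := by
    have hend : e = -d := by rw [he, hd]; abel
    rw [hend, inner_neg_left, real_inner_comm]
  have hnd : ‖d‖ = ‖e‖ := by rw [hd, he, norm_sub_rev]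
  have hne : ‖fk1 - fdag‖ = ‖e‖ := rfl
  have hIgeq : ν * ‖e‖ ^ 2 ≤ (inner ℝ e (gradL fk1) : ℝ) + (1 / η) * (inner ℝ e w : ℝ) := by
    have hC : Φ fk1 - Φ fdag ≤ (1 / η) * (inner ℝ e w : ℝ) := by
      rw [hed]; linarith [stepC]
    have hA : L fk1 - L fdag + ν / 2 * ‖e‖ ^ 2 ≤ (inner ℝ e (gradL fk1) : ℝ) := by
      rw [heg]
      have := stepA
      rw [show fdag - fk1 = d from rfl, hnd] at this
      linarith
    have hB := stepB
    rw [hne] at hB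
    linarith
  rw [hinner]
  calc ‖e‖ ^ 2 = (1 / ν) * (ν * ‖e‖ ^ 2) := by field_simp
    _ ≤ (1 / ν) * ((inner ℝ e (gradL fk1) : ℝ) + (1 / η) * (inner ℝ e w : ℝ)) := by
        apply mul_le_mul_of_nonneg_left hIgeq (by positivity)
end
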